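/- arXiv:1203.2666 — 4 statements merged into one kernel-verified Lean document; each statement's English description precedes it below -/
import Mathlib

section
/- Let μ be a positive Borel measure on ℂ₊ supported in the sector S(θ) = {z : |arg z| < θ} with 0 < θ < π/2, and let 0 < α < 1. If the Laplace–Carleson embedding ℒ : L²((0,∞), t^α dt) → L²(ℂ₊, μ) is bounded with norm κ, then there is a constant γ (depending only on κ and α) such that μ(T_I) ≤ γ |I|^{1-α} for every interval I ⊂ iℝ symmetric about 0, where T_I = {x+iy : |I|/2 < x ≤ |I|, |y| ≤ |I|/2} is the right half of the Carleson square over I. -/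
open MeasureTheory Complex Set
open scoped ENNReal

/-- Necessity of the half-square Carleson condition: if `μ` is supported in a sector
`S(θ)`, `0 < θ < π/2`, `0 < α < 1`, and the Laplace–Carleson embedding
`ℒ : L²((0,∞), t^α dt) → L²(ℂ₊, μ)` is bounded with norm `κ`, then
`μ(T_I) ≤ γ |I|^{1-α}` for every interval `I ⊂ iℝ` symmetric about `0`, where `T_I` is the
right half of the Carleson square `Q_I`. -/
theorem carleson_half_square_necessary
    (μ : Measure ℂ) (θ : ℝ) (hθ0 : 0 < θ) (hθ1 : θ < Real.pi / 2)
    (hsupp : μ {z : ℂ | ¬ (0 < z.re ∧ |Complex.arg z| < θ)} = 0)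
    (α : ℝ) (hα0 : 0 < α) (hα1 : α < 1) (κ : ℝ) (hκ : 0 < κ)
    (hbdd : ∀ f : ℝ → ℂ, Measurable f →
      Integrable (fun t => ‖f t‖ ^ 2 * t ^ α) ((volume : Measure ℝ).restrict (Ioi 0)) →
      (∀ z : ℂ, 0 < z.re →
        IntegrableOn (fun t : ℝ => Complex.exp (-(t : ℂ) * z) * f t) (Ioi 0)) →
      (∫⁻ z : ℂ, (‖∫ t in Ioi (0 : ℝ), Complex.exp (-(t : ℂ) * z) * f t‖₊ : ℝ≥0∞) ^ 2 ∂μ)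
        ≤ ENNReal.ofReal (κ ^ 2 * ∫ t in Ioi (0 : ℝ), ‖f t‖ ^ 2 * t ^ α)) :
    ∃ γ > 0, ∀ L > (0 : ℝ),
      μ {z : ℂ | L / 2 < z.re ∧ z.re ≤ L ∧ |z.im| ≤ L / 2}
        ≤ ENNReal.ofReal (γ * L ^ (1 - α)) := by
  classical
  have h1α : (0:ℝ) < 1 - α := by linarith
  set c1 : ℝ := Real.exp (-1) * (1/2) with hc1
  have hc1pos : 0 < c1 := by positivity
  refine ⟨κ^2 * (1-α) / c1^2, by positivity, ?_⟩
  intro L hL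
  set b : ℝ := 1/L with hb
  have hbpos : 0 < b := by positivity
  set g : ℝ → ℝ := fun t => t ^ (-α) with hg
  set f : ℝ → ℂ := fun t => (Ioc (0:ℝ) b).indicator (fun t => ((g t : ℝ) : ℂ)) t with hf
  set J : ℝ := b ^ (1-α) / (1-α) with hJdef
  have hJpos : 0 < J := by positivity
  -- measurability of f
  have hmeas : Measurable f := by
    apply Measurable.indicator _ measurableSet_Ioc
    exact Complex.measurable_ofReal.comp (by fun_prop : Measurable fun t : ℝ => t ^ (-α))
  -- integrability of g on Ioc 0 b
  have hIoc : IntegrableOn g (Ioc 0 b) volume := by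
    rw [← intervalIntegrable_iff_integrableOn_Ioc_of_le hbpos.le]
    exact intervalIntegral.intervalIntegrable_rpow' (by linarith)
  have hJ : ∫ t in Ioc (0:ℝ) b, g t = J := by
    rw [← intervalIntegral.integral_of_le hbpos.le, hg]
    rw [integral_rpow (Or.inl (by linarith))]
    rw [Real.zero_rpow (by linarith), hJdef]
    ring_nf
  -- the weighted function is the indicator of g
  have hweight : (fun t => ‖f t‖ ^ 2 * t ^ α) = (Ioc (0:ℝ) b).indicator g := by
    funext t
    by_cases ht : t ∈ Ioc (0:ℝ) b
    · rw [hf]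
      simp only [Set.indicator_of_mem ht]
      rw [Complex.norm_real, Real.norm_eq_abs, _root_.abs_of_nonneg (Real.rpow_nonneg ht.1.le _)]
      rw [hg]
      rw [sq, mul_assoc, ← Real.rpow_add ht.1, neg_add_cancel, Real.rpow_zero, mul_one]
    · simp [hf, Set.indicator_of_notMem ht]
  have hI1 : Integrable (fun t => ‖f t‖ ^ 2 * t ^ α) ((volume : Measure ℝ).restrict (Ioi 0)) := by
    rw [hweight, integrable_indicator_iff measurableSet_Ioc]
    rw [IntegrableOn, Measure.restrict_restrict measurableSet_Ioc,
      Set.inter_eq_self_of_subset_left (Set.Ioc_subset_Ioi_self)]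
    exact hIoc
  have hval : ∫ t in Ioi (0:ℝ), ‖f t‖ ^ 2 * t ^ α = J := by
    rw [hweight, setIntegral_indicator measurableSet_Ioc,
      Set.inter_eq_self_of_subset_right (Set.Ioc_subset_Ioi_self), hJ]
  -- pointwise indicator form of the integrand
  have hind : ∀ z : ℂ, (fun t : ℝ => Complex.exp (-(t:ℂ) * z) * f t)
      = (Ioc (0:ℝ) b).indicator (fun t => Complex.exp (-(t:ℂ) * z) * ((g t : ℝ) : ℂ)) := by
    intro z; funext t
    by_cases ht : t ∈ Ioc (0:ℝ) b
    · simp [hf, Set.indicator_of_mem ht]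
    · simp [hf, Set.indicator_of_notMem ht]
  have hIocz : ∀ z : ℂ, 0 ≤ z.re →
      IntegrableOn (fun t : ℝ => Complex.exp (-(t:ℂ) * z) * ((g t:ℝ):ℂ)) (Ioc (0:ℝ) b) volume := by
    intro z hz
    apply Integrable.bdd_mul (c := 1) hIoc.ofReal
    · exact (Complex.continuous_exp.comp ((Complex.continuous_ofReal.neg).mul continuous_const)).aestronglyMeasurable
    · filter_upwards [self_mem_ae_restrict measurableSet_Ioc] with t ht
      rw [Complex.norm_exp]
      apply Real.exp_le_one_iff.2
      have h1 : (-(t:ℂ) * z).re = -(t * z.re) := by simp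
      rw [h1]
      nlinarith [mul_nonneg ht.1.le hz]
  have hInt : ∀ z : ℂ, 0 < z.re →
      IntegrableOn (fun t : ℝ => Complex.exp (-(t:ℂ) * z) * f t) (Ioi 0) := by
    intro z hz
    rw [hind z, IntegrableOn, integrable_indicator_iff measurableSet_Ioc,
        IntegrableOn, Measure.restrict_restrict measurableSet_Ioc,
        Set.inter_eq_self_of_subset_left Set.Ioc_subset_Ioi_self]
    exact hIocz z hz.le
  have H := hbdd f hmeas hI1 hInt
  rw [hval] at H
  -- lower bound on the transform on the half-square
  have hlow : ∀ z : ℂ, L/2 < z.re → z.re ≤ L → |z.im| ≤ L/2 →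
      c1 * J ≤ ‖∫ t in Ioi (0:ℝ), Complex.exp (-(t:ℂ) * z) * f t‖ := by
    intro z hz1 hz2 hz3
    have hzre : 0 ≤ z.re := by linarith
    have hIz := hIocz z hzre
    have e1 : ∫ t in Ioi (0:ℝ), Complex.exp (-(t:ℂ)*z) * f t
        = ∫ t in Ioc (0:ℝ) b, Complex.exp (-(t:ℂ)*z) * ((g t:ℝ):ℂ) := by
      rw [hind z, setIntegral_indicator measurableSet_Ioc,
        Set.inter_eq_self_of_subset_right Set.Ioc_subset_Ioi_self]
    have e2 := integral_re hIz
    simp only [RCLike.re_to_complex] at e2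
    have e3 : ∀ t ∈ Ioc (0:ℝ) b, c1 * g t ≤ (Complex.exp (-(t:ℂ)*z) * ((g t:ℝ):ℂ)).re := by
      intro t ht
      have ht0 : 0 < t := ht.1
      have hgnn : 0 ≤ g t := Real.rpow_nonneg ht0.le _
      have hre : (Complex.exp (-(t:ℂ)*z) * ((g t:ℝ):ℂ)).re
          = Real.exp (-(t*z.re)) * Real.cos (t*z.im) * g t := by
        rw [Complex.mul_re]
        simp [Complex.exp_re, Complex.exp_im, Complex.neg_re, Complex.neg_im,
          Complex.mul_re, Complex.mul_im, Real.cos_neg]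
      have htz : t * z.re ≤ 1 := by
        calc t * z.re ≤ b * L := mul_le_mul ht.2 hz2 hzre hbpos.le
          _ = 1 := by rw [hb]; field_simp
      have hexp : Real.exp (-1) ≤ Real.exp (-(t*z.re)) := Real.exp_le_exp.2 (by linarith)
      have habs : |t * z.im| ≤ 1/2 := by
        rw [abs_mul, abs_of_pos ht0]
        calc t * |z.im| ≤ b * (L/2) := mul_le_mul ht.2 hz3 (abs_nonneg _) hbpos.le
          _ = 1/2 := by rw [hb]; field_simp
      have hsq : (t*z.im)^2 ≤ (1/2:ℝ)^2 := by
        rw [← _root_.sq_abs]; exact pow_le_pow_left₀ (abs_nonneg _) habs 2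
      have hcos : (1:ℝ)/2 ≤ Real.cos (t*z.im) := by
        have h2 := Real.one_sub_sq_div_two_le_cos (x := t*z.im)
        nlinarith
      have hmm : Real.exp (-1) * (1/2) ≤ Real.exp (-(t*z.re)) * Real.cos (t*z.im) :=
        mul_le_mul hexp hcos (by norm_num) (Real.exp_pos _).le
      rw [hre, hc1]
      exact mul_le_mul_of_nonneg_right hmm hgnn
    have e4' : ∫ t in Ioc (0:ℝ) b, c1 * g t = c1 * J := by
      rw [integral_const_mul, hJ]
    have hIzre : IntegrableOn (fun t : ℝ => (Complex.exp (-(t:ℂ)*z) * ((g t:ℝ):ℂ)).re)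
        (Ioc (0:ℝ) b) volume := by
      have := hIz.re
      simpa only [RCLike.re_to_complex, IntegrableOn] using this
    have e4 : c1 * J ≤ ∫ t in Ioc (0:ℝ) b, (Complex.exp (-(t:ℂ)*z) * ((g t:ℝ):ℂ)).re := by
      rw [← e4']
      exact setIntegral_mono_on (hIoc.const_mul c1) hIzre measurableSet_Ioc e3
    calc c1 * J ≤ (∫ t in Ioc (0:ℝ) b, Complex.exp (-(t:ℂ)*z) * ((g t:ℝ):ℂ)).re := by
          rw [← e2]; exact e4
      _ ≤ ‖∫ t in Ioc (0:ℝ) b, Complex.exp (-(t:ℂ)*z) * ((g t:ℝ):ℂ)‖ := by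
          exact Complex.re_le_norm _
      _ = ‖∫ t in Ioi (0:ℝ), Complex.exp (-(t:ℂ)*z) * f t‖ := by rw [e1]
  -- Chebyshev
  set T : Set ℂ := {z : ℂ | L / 2 < z.re ∧ z.re ≤ L ∧ |z.im| ≤ L / 2} with hT
  have hTm : MeasurableSet T := by
    apply MeasurableSet.inter (measurableSet_lt measurable_const Complex.measurable_re)
    exact MeasurableSet.inter (measurableSet_le Complex.measurable_re measurable_const)
      (measurableSet_le (Complex.measurable_im.abs) measurable_const)
  have chain : ENNReal.ofReal ((c1*J)^2) * μ T ≤ ENNReal.ofReal (κ^2 * J) := by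
    calc ENNReal.ofReal ((c1*J)^2) * μ T
        = ∫⁻ _ in T, ENNReal.ofReal ((c1*J)^2) ∂μ := (setLIntegral_const _ _).symm
      _ ≤ ∫⁻ z in T, (‖∫ t in Ioi (0:ℝ), Complex.exp (-(t:ℂ) * z) * f t‖₊ : ℝ≥0∞) ^ 2 ∂μ := by
          apply setLIntegral_mono' hTm
          intro z hz
          rw [← ENNReal.ofReal_coe_nnreal, coe_nnnorm, ← ENNReal.ofReal_pow (norm_nonneg _)]
          refine ENNReal.ofReal_le_ofReal ?_
          have h := hlow z hz.1 hz.2.1 hz.2.2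
          have : 0 ≤ c1 * J := by positivity
          exact pow_le_pow_left₀ this h 2
      _ ≤ ∫⁻ z, (‖∫ t in Ioi (0:ℝ), Complex.exp (-(t:ℂ) * z) * f t‖₊ : ℝ≥0∞) ^ 2 ∂μ :=
          setLIntegral_le_lintegral _ _
      _ ≤ ENNReal.ofReal (κ^2 * J) := H
  have hC0 : ENNReal.ofReal ((c1*J)^2) ≠ 0 := ne_of_gt (ENNReal.ofReal_pos.2 (by positivity))
  have final : μ T ≤ ENNReal.ofReal (κ^2*J) / ENNReal.ofReal ((c1*J)^2) :=
    (ENNReal.le_div_iff_mul_le (Or.inl hC0) (Or.inl ENNReal.ofReal_ne_top)).2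
      (by rwa [mul_comm] at chain)
  rw [← ENNReal.ofReal_div_of_pos (by positivity)] at final
  have halg : κ^2*J/((c1*J)^2) = κ^2*(1-α)/c1^2 * L^(1-α) := by
    have hbL : b ^ (1-α) = (L ^ (1-α))⁻¹ := by rw [hb, one_div, Real.inv_rpow hL.le]
    have hP : (0:ℝ) < L^(1-α) := Real.rpow_pos_of_pos hL _
    rw [hJdef, hbL]
    field_simp
  rw [halg] at final
  exact final
end

section
/- Let μ be a positive Borel measure supported in the sector S(θ) ⊂ ℂ₊ with 0 < θ < arctan(1/2), and 0 < α < 1. If there is γ > 0 with μ(T_n) ≤ γ 2^{n(1-α)} for all n ∈ ℤ, where T_n = {x+iy : 2^{n-1} < x ≤ 2^n, |y| ≤ 2^{n-1}}, then the Laplace–Carleson embedding ℒ : L²((0,∞), t^α dt) → L²(ℂ₊, μ) is bounded, with norm controlled by a constant times γ^{1/2}. -/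
open MeasureTheory Complex Set
open scoped ENNReal

namespace CarlesonAux

lemma lint_gamma {a r : ℝ} (ha : 0 < a) (hr : 0 < r) :
    ∫⁻ t in Ioi (0:ℝ), ENNReal.ofReal (t ^ (a-1) * Real.exp (-(r*t)))
      = ENNReal.ofReal ((1/r) ^ a * Real.Gamma a) := by
  rw [← ofReal_integral_eq_lintegral_ofReal, Real.integral_rpow_mul_exp_neg_mul_Ioi ha hr]
  · have h := integrableOn_rpow_mul_exp_neg_mul_rpow (p := 1) (s := a - 1) (b := r)
      (by linarith) zero_lt_one hr
    apply h.congr_fun ?_ measurableSet_Ioi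
    intro t ht
    simp [Real.rpow_one, neg_mul]
  · filter_upwards [ae_restrict_mem measurableSet_Ioi] with t ht
    have : (0:ℝ) < t := ht
    positivity

lemma exists_dyadic {x : ℝ} (hx : 0 < x) : ∃ n : ℤ, (2:ℝ)^(n-1) < x ∧ x ≤ (2:ℝ)^n := by
  have h1 : (2:ℝ)^(Int.log 2 x⁻¹) ≤ x⁻¹ := Int.zpow_log_le_self (by norm_num) (by positivity)
  have h2 : x⁻¹ < (2:ℝ)^(Int.log 2 x⁻¹ + 1) := Int.lt_zpow_succ_log_self (by norm_num) _
  set m := Int.log 2 x⁻¹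
  have hp1 : (0:ℝ) < (2:ℝ)^(m+1) := by positivity
  have hpm : (0:ℝ) < (2:ℝ)^m := by positivity
  refine ⟨-m, ?_, ?_⟩
  · have : ((2:ℝ)^(m+1))⁻¹ < x := by
      rw [inv_lt_comm₀ hp1 hx]
      exact h2
    calc (2:ℝ)^(-m-1) = ((2:ℝ)^(m+1))⁻¹ := by
          rw [← zpow_neg]; ring_nf
      _ < x := this
  · rw [zpow_neg]
    rw [le_inv_comm₀ hx hpm]  -- x ≤ (2^m)⁻¹ ↔ 2^m ≤ x⁻¹ ??
    exact h1

lemma im_le {θ : ℝ} (hθ1 : θ < Real.arctan (1/2)) {z : ℂ} (hre : 0 < z.re)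
    (harg : |Complex.arg z| < θ) : |z.im| ≤ z.re / 2 := by
  have hπ2 : |Complex.arg z| < Real.pi/2 := harg.trans (hθ1.trans (Real.arctan_lt_pi_div_two _))
  obtain ⟨hl, hu⟩ := abs_lt.mp hπ2
  have harctan : Real.arctan (z.im / z.re) = Complex.arg z := by
    rw [← Complex.tan_arg, Real.arctan_tan (by linarith) hu]
  have habs : |z.im / z.re| < 1/2 := by
    by_contra hcon
    push_neg at hcon
    have h1 : Real.arctan (1/2) ≤ Real.arctan |z.im / z.re| :=
      Real.arctan_strictMono.monotone hcon
    have h2 : Real.arctan |z.im / z.re| = |Complex.arg z| := by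
      rcases le_or_gt 0 (z.im / z.re) with h | h
      · rw [_root_.abs_of_nonneg h, harctan]
        rw [_root_.abs_of_nonneg]
        rw [← harctan]
        calc (0:ℝ) = Real.arctan 0 := Real.arctan_zero.symm
          _ ≤ _ := Real.arctan_strictMono.monotone h
      · rw [_root_.abs_of_neg h, Real.arctan_neg, harctan]
        rw [_root_.abs_of_neg]
        rw [← harctan]
        simpa using Real.arctan_strictMono h
    rw [h2] at h1
    linarith [harg.trans hθ1]
  rw [abs_div, abs_of_pos hre] at habs
  rw [div_lt_iff₀ hre] at habs
  linarith


-- real bound, k = j ≥ 0 case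
lemma phi_bound_pos {β c : ℝ} (hβ0 : 0 < β) (hβ1 : β ≤ 1) (hc2 : 1/2 < c) (hc1 : c ≤ 1) (j : ℕ) :
    (c * (2:ℝ)^(j:ℤ))^β * Real.exp (-(c * (2:ℝ)^(j:ℤ))) ≤ 16 * ((2:ℝ)^(-β))^j := by
  set u : ℝ := c * (2:ℝ)^(j:ℤ) with hu_def
  have hc0 : 0 < c := by linarith
  have hu : 0 < u := by positivity
  have hbase : (2:ℝ)^((j:ℝ)-1) ≤ u := by
    have h1 : (2:ℝ)^((j:ℝ)-1) = (2:ℝ)^(j:ℝ) / 2 := by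
      rw [Real.rpow_sub (by norm_num), Real.rpow_one]
    have h2 : ((2:ℝ)^(j:ℤ) : ℝ) = (2:ℝ)^(j:ℝ) := by
      rw [← Real.rpow_intCast]; norm_num
    rw [h1, ← h2, hu_def]
    have hp : (0:ℝ) < (2:ℝ)^(j:ℤ) := by positivity
    nlinarith
  -- exp(-u) ≤ 4 * u^(-(2:ℝ))
  have hexp : Real.exp (-u) ≤ 4 * u^(-(2:ℝ)) := by
    have h1 : u/2 ≤ Real.exp (u/2) := by
      have := Real.add_one_le_exp (u/2); linarith
    have h2 : u^2/4 ≤ Real.exp u := by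
      have h3 : Real.exp u = Real.exp (u/2) * Real.exp (u/2) := by
        rw [← Real.exp_add]; ring_nf
      nlinarith [Real.exp_pos (u/2)]
    have h4 : u^(-(2:ℝ)) = (u^2)⁻¹ := by
      rw [Real.rpow_neg hu.le, Real.rpow_two]
    rw [Real.exp_neg, h4]
    rw [div_le_iff₀ (by positivity)] at h2
    have h5 : 0 < u^2 := by positivity
    have h6 : 0 < Real.exp u := Real.exp_pos u
    rw [inv_le_iff_one_le_mul₀ h6]  -- might not be right form
    calc (1:ℝ) = (u^2)⁻¹ * u^2 := by field_simp
      _ ≤ 4 * (u^2)⁻¹ * Real.exp u := by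
          rw [mul_comm (4:ℝ) (u^2)⁻¹, mul_assoc]
          exact mul_le_mul_of_nonneg_left (by linarith) (by positivity)
  have step1 : u^β * Real.exp (-u) ≤ 4 * u^(β-(2:ℝ)) := by
    calc u^β * Real.exp (-u) ≤ u^β * (4 * u^(-(2:ℝ))) :=
          mul_le_mul_of_nonneg_left hexp (by positivity)
      _ = 4 * u^(β-(2:ℝ)) := by
          rw [show β - (2:ℝ) = β + (-2) by ring, Real.rpow_add hu]; ring
  have step2 : u^(β-(2:ℝ)) ≤ ((2:ℝ)^((j:ℝ)-1))^(β-(2:ℝ)) :=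
    Real.rpow_le_rpow_of_nonpos (by positivity) hbase (by linarith)
  have step3 : ((2:ℝ)^((j:ℝ)-1))^(β-(2:ℝ)) ≤ 4 * ((2:ℝ)^(-β))^j := by
    rw [← Real.rpow_mul (by norm_num)]
    have he : ((j:ℝ)-1)*(β-2) = (2-β) + ((j:ℝ)*(β-2)) := by ring
    rw [he, Real.rpow_add (by norm_num)]
    have h1 : (2:ℝ)^(2-β) ≤ 4 := by
      calc (2:ℝ)^(2-β) ≤ (2:ℝ)^(2:ℝ) := Real.rpow_le_rpow_of_exponent_le one_le_two (by linarith)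
        _ = 4 := by rw [Real.rpow_two]; norm_num
    have h2 : (2:ℝ)^((j:ℝ)*(β-2)) ≤ ((2:ℝ)^(-β))^j := by
      have : ((2:ℝ)^(-β))^j = (2:ℝ)^((-β)*(j:ℝ)) := by
        rw [Real.rpow_mul (by norm_num), ← Real.rpow_natCast ((2:ℝ)^(-β)) j]
      rw [this]
      apply Real.rpow_le_rpow_of_exponent_le one_le_two
      have hj : (0:ℝ) ≤ (j:ℝ) := Nat.cast_nonneg j
      nlinarith
    have hp2 : (0:ℝ) < (2:ℝ)^((j:ℝ)*(β-2)) := by positivity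
    nlinarith [Real.rpow_nonneg (by norm_num : (0:ℝ) ≤ 2) (-β)]
  calc u^β * Real.exp (-u) ≤ 4 * u^(β-(2:ℝ)) := step1
    _ ≤ 4 * ((2:ℝ)^((j:ℝ)-1))^(β-(2:ℝ)) := by linarith
    _ ≤ 4 * (4 * ((2:ℝ)^(-β))^j) := by linarith
    _ = 16 * ((2:ℝ)^(-β))^j := by ring

lemma phi_bound_neg {β c : ℝ} (hβ0 : 0 < β) (hc0 : 0 < c) (hc1 : c ≤ 1) (j : ℕ) :
    (c * (2:ℝ)^(-(j:ℤ)-1))^β * Real.exp (-(c * (2:ℝ)^(-(j:ℤ)-1))) ≤ 16 * ((2:ℝ)^(-β))^j := by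
  set u : ℝ := c * (2:ℝ)^(-(j:ℤ)-1) with hu_def
  have hu : 0 < u := by positivity
  have h1 : u^β * Real.exp (-u) ≤ u^β := by
    have : Real.exp (-u) ≤ 1 := Real.exp_le_one_iff.mpr (by linarith)
    nlinarith [Real.rpow_nonneg hu.le β]
  have h2 : u ≤ (2:ℝ)^(-(j:ℝ)) := by
    have hz : ((2:ℝ)^(-(j:ℤ)-1) : ℝ) = (2:ℝ)^(-(j:ℝ)-1) := by
      rw [← Real.rpow_intCast]; push_cast; ring_nf
    have hle : (2:ℝ)^(-(j:ℝ)-1) ≤ (2:ℝ)^(-(j:ℝ)) :=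
      Real.rpow_le_rpow_of_exponent_le one_le_two (by linarith)
    have hp : (0:ℝ) < (2:ℝ)^(-(j:ℤ)-1) := by positivity
    calc u ≤ (2:ℝ)^(-(j:ℤ)-1) := by nlinarith
      _ = (2:ℝ)^(-(j:ℝ)-1) := hz
      _ ≤ (2:ℝ)^(-(j:ℝ)) := hle
  have h3 : u^β ≤ ((2:ℝ)^(-(j:ℝ)))^β := Real.rpow_le_rpow hu.le h2 hβ0.le
  have h4 : ((2:ℝ)^(-(j:ℝ)))^β = ((2:ℝ)^(-β))^j := by
    rw [← Real.rpow_mul (by norm_num), ← Real.rpow_natCast ((2:ℝ)^(-β)) j,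
      ← Real.rpow_mul (by norm_num)]
    ring_nf
  have h5 : (0:ℝ) ≤ ((2:ℝ)^(-β))^j := by positivity
  calc u^β * Real.exp (-u) ≤ u^β := h1
    _ ≤ ((2:ℝ)^(-β))^j := by rw [← h4]; exact h3
    _ ≤ 16 * ((2:ℝ)^(-β))^j := by linarith

lemma sum_phi {β : ℝ} (hβ0 : 0 < β) (hβ1 : β ≤ 1) {t : ℝ} (ht : 0 < t) :
    ∑' n : ℤ, ENNReal.ofReal ((t * (2:ℝ)^(n-1))^β * Real.exp (-(t * (2:ℝ)^(n-1))))
      ≤ 32 * (1 - ENNReal.ofReal ((2:ℝ)^(-β)))⁻¹ := by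
  set m := Int.log 2 t⁻¹ with hm
  have h1 : (2:ℝ)^m ≤ t⁻¹ := Int.zpow_log_le_self (by norm_num) (by positivity)
  have h2 : t⁻¹ < (2:ℝ)^(m+1) := Int.lt_zpow_succ_log_self (by norm_num) _
  set c := t * (2:ℝ)^m with hc
  have hc0 : 0 < c := by positivity
  have hc1 : c ≤ 1 := by
    have := mul_le_mul_of_nonneg_left h1 ht.le
    rwa [mul_inv_cancel₀ ht.ne'] at this
  have hc2 : 1/2 < c := by
    have h3 : 1 < t * (2:ℝ)^(m+1) := by
      have := mul_lt_mul_of_pos_left h2 ht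
      rwa [mul_inv_cancel₀ ht.ne'] at this
    have h4 : (2:ℝ)^(m+1) = 2 * (2:ℝ)^m := by
      rw [zpow_add₀ (by norm_num : (2:ℝ) ≠ 0), zpow_one]; ring
    rw [h4] at h3; rw [hc]; linarith
  set r : ℝ≥0∞ := ENNReal.ofReal ((2:ℝ)^(-β)) with hr
  -- reindex
  have hre : ∑' n : ℤ, ENNReal.ofReal ((t * (2:ℝ)^(n-1))^β * Real.exp (-(t * (2:ℝ)^(n-1))))
      = ∑' k : ℤ, ENNReal.ofReal ((c * (2:ℝ)^k)^β * Real.exp (-(c * (2:ℝ)^k))) := by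
    rw [← (Equiv.addRight (m+1)).tsum_eq
      (fun n : ℤ => ENNReal.ofReal ((t * (2:ℝ)^(n-1))^β * Real.exp (-(t * (2:ℝ)^(n-1)))))]
    apply tsum_congr
    intro k
    have : t * (2:ℝ)^(k + (m+1) - 1) = c * (2:ℝ)^k := by
      rw [hc, show k + (m+1) - 1 = m + k by ring, zpow_add₀ (by norm_num : (2:ℝ) ≠ 0)]
      ring
    simp only [Equiv.coe_addRight, this]
  rw [hre]
  have hbound : ∀ k : ℤ, ENNReal.ofReal ((c * (2:ℝ)^k)^β * Real.exp (-(c * (2:ℝ)^k)))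
      ≤ (Int.rec (fun j : ℕ => (16:ℝ≥0∞) * r^j) (fun j : ℕ => (16:ℝ≥0∞) * r^j) k : ℝ≥0∞) := by
    intro k
    have key : ∀ j : ℕ, ENNReal.ofReal (16 * ((2:ℝ)^(-β))^j) = 16 * r^j := by
      intro j
      rw [ENNReal.ofReal_mul (by norm_num), ENNReal.ofReal_pow (by positivity)]
      norm_num
      rfl
    cases k with
    | ofNat j =>
        show ENNReal.ofReal ((c * (2:ℝ)^(Int.ofNat j))^β * Real.exp (-(c * (2:ℝ)^(Int.ofNat j))))
          ≤ 16 * r^j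
        have hns : ((2:ℝ)^(Int.ofNat j) : ℝ) = (2:ℝ)^(j:ℤ) := rfl
        rw [hns]
        exact le_trans (ENNReal.ofReal_le_ofReal (phi_bound_pos hβ0 hβ1 hc2 hc1 j)) (key j).le
    | negSucc j =>
        show ENNReal.ofReal ((c * (2:ℝ)^(Int.negSucc j))^β * Real.exp (-(c * (2:ℝ)^(Int.negSucc j))))
          ≤ 16 * r^j
        have hns : ((2:ℝ)^(Int.negSucc j) : ℝ) = (2:ℝ)^(-(j:ℤ)-1) := by
          congr 1
          rw [Int.negSucc_eq]; ring
        rw [hns]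
        exact le_trans (ENNReal.ofReal_le_ofReal (phi_bound_neg hβ0 hc0 hc1 j)) (key j).le
  calc ∑' k : ℤ, ENNReal.ofReal ((c * (2:ℝ)^k)^β * Real.exp (-(c * (2:ℝ)^k)))
      ≤ ∑' k : ℤ, (Int.rec (fun j : ℕ => (16:ℝ≥0∞) * r^j) (fun j : ℕ => (16:ℝ≥0∞) * r^j) k : ℝ≥0∞) :=
        ENNReal.tsum_le_tsum hbound
    _ = (∑' j : ℕ, (16:ℝ≥0∞) * r^j) + ∑' j : ℕ, (16:ℝ≥0∞) * r^j :=
        tsum_int_rec ENNReal.summable ENNReal.summable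
    _ = 32 * (1 - r)⁻¹ := by
        rw [ENNReal.tsum_mul_left, ENNReal.tsum_geometric]
        ring


lemma pointwise_CS {α β : ℝ} (hα0 : 0 < α) (hα1 : α < 1) (hβ : β = (1-α)/2)
    (f : ℝ → ℂ) (hf : Measurable f) {z : ℂ} (hx : 0 < z.re) :
    (‖∫ t in Ioi (0:ℝ), Complex.exp (-(t:ℂ) * z) * f t‖₊ : ℝ≥0∞)^2
      ≤ ENNReal.ofReal (Real.Gamma β) *
        ∫⁻ t in Ioi (0:ℝ),
          ENNReal.ofReal (z.re^(α-1) * ((t*z.re)^β * Real.exp (-(t*z.re))))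
            * (ENNReal.ofReal (t^α) * ((‖f t‖₊ : ℝ≥0∞))^2) := by
  have hβ0 : 0 < β := by rw [hβ]; linarith
  set x := z.re with hxdef
  set ν := (volume : Measure ℝ).restrict (Ioi 0) with hν
  set g₁ : ℝ → ℝ≥0∞ := fun t =>
    ENNReal.ofReal (Real.exp (-(t*x)/2) * (t^(-((α+β)/2)) * x^(-(β/2)))) with hg₁
  set g₂ : ℝ → ℝ≥0∞ := fun t =>
    ENNReal.ofReal (Real.exp (-(t*x)/2) * (t^((α+β)/2) * x^(β/2))) * (‖f t‖₊ : ℝ≥0∞) with hg₂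
  -- step 1+2+3 : L ≤ ∫ g₁ g₂
  have step1 : (‖∫ t in Ioi (0:ℝ), Complex.exp (-(t:ℂ) * z) * f t‖₊ : ℝ≥0∞)
      ≤ ∫⁻ t, g₁ t * g₂ t ∂ν := by
    refine le_trans (enorm_integral_le_lintegral_enorm _) (le_of_eq ?_)
    apply lintegral_congr_ae
    filter_upwards [ae_restrict_mem measurableSet_Ioi] with t ht
    have ht' : (0:ℝ) < t := ht
    have hnorm : (‖Complex.exp (-(t:ℂ) * z) * f t‖₊ : ℝ≥0∞)
        = ENNReal.ofReal (Real.exp (-(t*x))) * (‖f t‖₊ : ℝ≥0∞) := by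
      rw [nnnorm_mul, ENNReal.coe_mul]
      congr 1
      rw [← enorm_eq_nnnorm, ← ofReal_norm_eq_enorm]
      congr 1
      rw [Complex.norm_exp]
      congr 1
      simp [Complex.neg_re, Complex.mul_re]
      exact Or.inl rfl
    rw [enorm_eq_nnnorm, hnorm, hg₁, hg₂]
    rw [← mul_assoc, ← ENNReal.ofReal_mul (by positivity)]
    congr 2
    have h1 : Real.exp (-(t*x)/2) * Real.exp (-(t*x)/2) = Real.exp (-(t*x)) := by
      rw [← Real.exp_add]; ring_nf
    have h2 : t^(-((α+β)/2)) * t^((α+β)/2) = 1 := by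
      rw [← Real.rpow_add ht']; simp
    have h3 : x^(-(β/2)) * x^(β/2) = 1 := by
      rw [← Real.rpow_add hx]; simp
    calc Real.exp (-(t*x)) = Real.exp (-(t*x)/2) * Real.exp (-(t*x)/2)
          * ((t^(-((α+β)/2)) * t^((α+β)/2)) * (x^(-(β/2)) * x^(β/2))) := by
          rw [h1, h2, h3]; ring
      _ = Real.exp (-(t*x)/2) * (t^(-((α+β)/2)) * x^(-(β/2)))
          * (Real.exp (-(t*x)/2) * (t^((α+β)/2) * x^(β/2))) := by ring
  -- measurability
  have hm₁ : AEMeasurable g₁ ν := by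
    apply Measurable.aemeasurable
    apply ENNReal.measurable_ofReal.comp
    fun_prop
  have hm₂ : AEMeasurable g₂ ν := by
    apply Measurable.aemeasurable
    apply Measurable.fun_mul
    · apply ENNReal.measurable_ofReal.comp; fun_prop
    · exact (hf.nnnorm).coe_nnreal_ennreal
  -- Hölder
  have hpq : Real.HolderConjugate 2 2 := Real.HolderConjugate.two_two
  have holder := ENNReal.lintegral_mul_le_Lp_mul_Lq ν hpq hm₁ hm₂
  -- compute A
  have hA : ∫⁻ t, g₁ t ^ (2:ℝ) ∂ν = ENNReal.ofReal (Real.Gamma β * x^(α-1)) := by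
    have hcongr : ∫⁻ t, g₁ t ^ (2:ℝ) ∂ν
        = ∫⁻ t in Ioi (0:ℝ), ENNReal.ofReal (x^(-β)) * ENNReal.ofReal (t^(β-1) * Real.exp (-(x*t))) := by
      apply lintegral_congr_ae
      filter_upwards [ae_restrict_mem measurableSet_Ioi] with t ht
      have ht' : (0:ℝ) < t := ht
      have hnn : (0:ℝ) ≤ Real.exp (-(t*x)/2) * (t^(-((α+β)/2)) * x^(-(β/2))) :=
        mul_nonneg (Real.exp_nonneg _)
          (mul_nonneg (Real.rpow_nonneg ht'.le _) (Real.rpow_nonneg hx.le _))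
      rw [hg₁]
      simp only []
      rw [ENNReal.ofReal_rpow_of_nonneg hnn (by norm_num : (0:ℝ) ≤ 2),
        ← ENNReal.ofReal_mul (Real.rpow_nonneg hx.le _)]
      congr 1
      rw [Real.rpow_two]
      have h1 : Real.exp (-(t*x)/2) * Real.exp (-(t*x)/2) = Real.exp (-(x*t)) := by
        rw [← Real.exp_add]; ring_nf
      have h2 : t^(-((α+β)/2)) * t^(-((α+β)/2)) = t^(β-1) := by
        rw [← Real.rpow_add ht']
        congr 1
        rw [hβ]; ring
      have h3 : x^(-(β/2)) * x^(-(β/2)) = x^(-β) := by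
        rw [← Real.rpow_add hx]
        congr 1
        ring
      calc (Real.exp (-(t*x)/2) * (t^(-((α+β)/2)) * x^(-(β/2))))^2
          = (t^(-((α+β)/2)) * t^(-((α+β)/2))) * ((x^(-(β/2)) * x^(-(β/2)))
            * (Real.exp (-(t*x)/2) * Real.exp (-(t*x)/2))) := by ring
        _ = x^(-β) * (t^(β-1) * Real.exp (-(x*t))) := by rw [h1, h2, h3]; ring
    rw [hcongr, lintegral_const_mul' _ _ ENNReal.ofReal_ne_top, lint_gamma hβ0 hx,
      ← ENNReal.ofReal_mul (by positivity)]
    congr 1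
    have h4 : (1/x)^β = x^(-β) := by
      rw [one_div, ← Real.rpow_neg_one x, ← Real.rpow_mul hx.le]
      ring_nf
    rw [h4, ← mul_assoc, ← Real.rpow_add hx,
      show -β + -β = α - 1 by rw [hβ]; ring]
    ring
  -- compute B
  have hB : ∫⁻ t, g₂ t ^ (2:ℝ) ∂ν
      = ∫⁻ t in Ioi (0:ℝ), ENNReal.ofReal (Real.exp (-(t*x)) * (t^(α+β) * x^β)) * ((‖f t‖₊ : ℝ≥0∞))^2 := by
    apply lintegral_congr_ae
    filter_upwards [ae_restrict_mem measurableSet_Ioi] with t ht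
    have ht' : (0:ℝ) < t := ht
    have hnn : (0:ℝ) ≤ Real.exp (-(t*x)/2) * (t^((α+β)/2) * x^(β/2)) :=
      mul_nonneg (Real.exp_nonneg _)
        (mul_nonneg (Real.rpow_nonneg ht'.le _) (Real.rpow_nonneg hx.le _))
    rw [hg₂]
    simp only []
    rw [ENNReal.mul_rpow_of_nonneg _ _ (by norm_num : (0:ℝ) ≤ 2),
      ENNReal.ofReal_rpow_of_nonneg hnn (by norm_num : (0:ℝ) ≤ 2)]
    congr 1
    · congr 1
      rw [Real.rpow_two]
      have h1 : Real.exp (-(t*x)/2) * Real.exp (-(t*x)/2) = Real.exp (-(t*x)) := by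
        rw [← Real.exp_add]; ring_nf
      have h2 : t^((α+β)/2) * t^((α+β)/2) = t^(α+β) := by
        rw [← Real.rpow_add ht']; congr 1; ring
      have h3 : x^(β/2) * x^(β/2) = x^β := by
        rw [← Real.rpow_add hx]; congr 1; ring
      calc (Real.exp (-(t*x)/2) * (t^((α+β)/2) * x^(β/2)))^2
          = (Real.exp (-(t*x)/2) * Real.exp (-(t*x)/2)) * ((t^((α+β)/2) * t^((α+β)/2))
            * (x^(β/2) * x^(β/2))) := by ring
        _ = Real.exp (-(t*x)) * (t^(α+β) * x^β) := by rw [h1, h2, h3]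
    · rw [← ENNReal.rpow_natCast]
      norm_num
  -- combine
  have key : (‖∫ t in Ioi (0:ℝ), Complex.exp (-(t:ℂ) * z) * f t‖₊ : ℝ≥0∞)^2
      ≤ (∫⁻ t, g₁ t ^ (2:ℝ) ∂ν) * (∫⁻ t, g₂ t ^ (2:ℝ) ∂ν) := by
    calc (‖∫ t in Ioi (0:ℝ), Complex.exp (-(t:ℂ) * z) * f t‖₊ : ℝ≥0∞)^2
        ≤ (∫⁻ t, g₁ t * g₂ t ∂ν)^2 := pow_le_pow_left₀ (by positivity) step1 2
      _ ≤ ((∫⁻ t, g₁ t ^ (2:ℝ) ∂ν)^((1:ℝ)/2) * (∫⁻ t, g₂ t ^ (2:ℝ) ∂ν)^((1:ℝ)/2))^2 := by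
          apply pow_le_pow_left₀ (by positivity)
          exact holder
      _ = (∫⁻ t, g₁ t ^ (2:ℝ) ∂ν) * (∫⁻ t, g₂ t ^ (2:ℝ) ∂ν) := by
          rw [mul_pow, ← ENNReal.rpow_natCast (_ ^ ((1:ℝ)/2)), ← ENNReal.rpow_natCast (_ ^ ((1:ℝ)/2)),
            ← ENNReal.rpow_mul, ← ENNReal.rpow_mul]
          norm_num
  rw [hA, hB] at key
  refine le_trans key (le_of_eq ?_)
  have hΓ : (0:ℝ) ≤ Real.Gamma β := Real.Gamma_nonneg_of_nonneg hβ0.le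
  rw [ENNReal.ofReal_mul hΓ, mul_assoc]
  congr 1
  rw [← lintegral_const_mul' _ _ (ENNReal.ofReal_ne_top (r := x^(α-1)))]
  apply lintegral_congr_ae
  filter_upwards [ae_restrict_mem measurableSet_Ioi] with t ht
  have ht' : (0:ℝ) < t := ht
  rw [← mul_assoc, ← ENNReal.ofReal_mul (Real.rpow_nonneg hx.le _)]
  have hnnQ : (0:ℝ) ≤ x^(α-1) * ((t*x)^β * Real.exp (-(t*x))) :=
    mul_nonneg (Real.rpow_nonneg hx.le _)
      (mul_nonneg (Real.rpow_nonneg (by positivity) _) (Real.exp_nonneg _))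
  have hQR : ENNReal.ofReal (x^(α-1) * ((t*x)^β * Real.exp (-(t*x))))
        * (ENNReal.ofReal (t^α) * ((‖f t‖₊ : ℝ≥0∞))^2)
      = ENNReal.ofReal ((x^(α-1) * ((t*x)^β * Real.exp (-(t*x)))) * t^α)
        * ((‖f t‖₊ : ℝ≥0∞))^2 := by
    rw [ENNReal.ofReal_mul hnnQ, mul_assoc]
  rw [hQR]
  congr 2
  rw [Real.mul_rpow ht'.le hx.le, Real.rpow_add ht']
  ring


lemma measurable_strip (n : ℤ) :
    MeasurableSet {z : ℂ | (2:ℝ)^(n-1) < z.re ∧ z.re ≤ (2:ℝ)^n} :=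
  (measurableSet_lt measurable_const Complex.measurable_re).inter
    (measurableSet_le Complex.measurable_re measurable_const)

lemma measurable_sector (θ : ℝ) :
    MeasurableSet {z : ℂ | 0 < z.re ∧ |Complex.arg z| < θ} :=
  (measurableSet_lt measurable_const Complex.measurable_re).inter
    (measurableSet_lt Complex.measurable_arg.abs measurable_const)

lemma strip_disjoint : Pairwise (Function.onFun Disjoint
    (fun n : ℤ => {z : ℂ | (2:ℝ)^(n-1) < z.re ∧ z.re ≤ (2:ℝ)^n})) := by
  intro i j hij
  have key : ∀ i j : ℤ, i < j →
      Disjoint {z : ℂ | (2:ℝ)^(i-1) < z.re ∧ z.re ≤ (2:ℝ)^i}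
        {z : ℂ | (2:ℝ)^(j-1) < z.re ∧ z.re ≤ (2:ℝ)^j} := by
    intro i j hlt
    rw [Set.disjoint_left]
    rintro z ⟨_, h2⟩ ⟨h3, _⟩
    have : (2:ℝ)^i ≤ (2:ℝ)^(j-1) := zpow_le_zpow_right₀ one_le_two (by omega)
    linarith
  rcases lt_or_gt_of_ne hij with h | h
  · exact key i j h
  · exact (key j i h).symm

-- the algebraic identity for the strip bound
lemma strip_algebra {α β γ t : ℝ} (hα1 : α < 1) (hβ0 : 0 < β) (ht : 0 < t) (n : ℤ) :
    ((2:ℝ)^(n-1) : ℝ)^(α-1) * ((t*(2:ℝ)^n)^β * Real.exp (-(t*(2:ℝ)^(n-1))))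
      * (γ * (2:ℝ)^((n:ℝ)*(1-α)))
    = (γ * (2:ℝ)^(1-α+β)) * ((t*(2:ℝ)^(n-1))^β * Real.exp (-(t*(2:ℝ)^(n-1)))) := by
  have hz : ∀ k : ℤ, ((2:ℝ)^k : ℝ) = (2:ℝ)^((k:ℝ)) := fun k => (Real.rpow_intCast 2 k).symm
  set E := Real.exp (-(t*(2:ℝ)^(n-1))) with hE
  rw [hz (n-1), hz n]
  push_cast
  have h1 : ((2:ℝ)^((n:ℝ)-1))^(α-1) = (2:ℝ)^(((n:ℝ)-1)*(α-1)) := by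
    rw [← Real.rpow_mul (by norm_num)]
  have h2 : (t*(2:ℝ)^((n:ℝ)))^β = t^β * (2:ℝ)^((n:ℝ)*β) := by
    rw [Real.mul_rpow ht.le (Real.rpow_nonneg (by norm_num) _), ← Real.rpow_mul (by norm_num)]
  have h3 : (t*(2:ℝ)^((n:ℝ)-1))^β = t^β * (2:ℝ)^(((n:ℝ)-1)*β) := by
    rw [Real.mul_rpow ht.le (Real.rpow_nonneg (by norm_num) _), ← Real.rpow_mul (by norm_num)]
  rw [h1, h2, h3]
  have h4 : (2:ℝ)^(((n:ℝ)-1)*(α-1)) * ((2:ℝ)^((n:ℝ)*β) * (2:ℝ)^((n:ℝ)*(1-α)))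
      = (2:ℝ)^((1-α+β) + ((n:ℝ)-1)*β) := by
    rw [← Real.rpow_add (by norm_num : (0:ℝ) < 2), ← Real.rpow_add (by norm_num : (0:ℝ) < 2)]
    congr 1; ring
  have h5 : (2:ℝ)^((1-α+β) + ((n:ℝ)-1)*β) = (2:ℝ)^(1-α+β) * (2:ℝ)^(((n:ℝ)-1)*β) :=
    Real.rpow_add (by norm_num) _ _
  calc (2:ℝ)^(((n:ℝ)-1)*(α-1)) * (t^β * (2:ℝ)^((n:ℝ)*β) * E) * (γ * (2:ℝ)^((n:ℝ)*(1-α)))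
      = γ * t^β * E * ((2:ℝ)^(((n:ℝ)-1)*(α-1)) * ((2:ℝ)^((n:ℝ)*β) * (2:ℝ)^((n:ℝ)*(1-α)))) := by
        ring
    _ = γ * t^β * E * ((2:ℝ)^(1-α+β) * (2:ℝ)^(((n:ℝ)-1)*β)) := by rw [h4, h5]
    _ = γ * (2:ℝ)^(1-α+β) * (t^β * (2:ℝ)^(((n:ℝ)-1)*β) * E) := by ring

lemma K_bound {θ α β γ : ℝ} (hθ1 : θ < Real.arctan (1/2)) (hα1 : α < 1)
    (hβ0 : 0 < β) (hβ1 : β ≤ 1) (hγ : 0 ≤ γ)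
    (μ : Measure ℂ)
    (hsupp : μ {z : ℂ | ¬ (0 < z.re ∧ |Complex.arg z| < θ)} = 0)
    (hcarl : ∀ n : ℤ, μ {z : ℂ | (2:ℝ)^(n-1) < z.re ∧ z.re ≤ (2:ℝ)^n ∧
        |z.im| ≤ (2:ℝ)^(n-1)} ≤ ENNReal.ofReal (γ * (2:ℝ)^((n:ℝ)*(1-α))))
    {t : ℝ} (ht : 0 < t) :
    ∫⁻ z, ENNReal.ofReal (z.re^(α-1) * ((t*z.re)^β * Real.exp (-(t*z.re)))) ∂μ
      ≤ ENNReal.ofReal (γ * (2:ℝ)^(1-α+β)) * (32 * (1 - ENNReal.ofReal ((2:ℝ)^(-β)))⁻¹) := by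
  set S := {z : ℂ | 0 < z.re ∧ |Complex.arg z| < θ} with hSdef
  set A : ℤ → Set ℂ := fun n => {z : ℂ | (2:ℝ)^(n-1) < z.re ∧ z.re ≤ (2:ℝ)^n} with hA
  have hScompl : Sᶜ = {z : ℂ | ¬ (0 < z.re ∧ |Complex.arg z| < θ)} := by
    ext z; simp [hSdef]
  have hae : ∀ᵐ z ∂μ, z ∈ S := by
    rw [ae_iff]
    convert hsupp using 2
    exact hScompl
  have hres : μ.restrict S = μ := Measure.restrict_eq_self_of_ae_mem hae
  set h : ℂ → ℝ≥0∞ := fun z =>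
    ENNReal.ofReal (z.re^(α-1) * ((t*z.re)^β * Real.exp (-(t*z.re)))) with hh
  have hcover : S = ⋃ n : ℤ, (A n ∩ S) := by
    ext z
    constructor
    · intro hz
      obtain ⟨n, hn1, hn2⟩ := exists_dyadic hz.1
      exact mem_iUnion.mpr ⟨n, ⟨hn1, hn2⟩, hz⟩
    · intro hz
      obtain ⟨n, _, hz2⟩ := mem_iUnion.mp hz
      exact hz2
  have hdecomp : ∫⁻ z, h z ∂μ = ∑' n : ℤ, ∫⁻ z in A n ∩ S, h z ∂μ := by
    conv_lhs => rw [← hres]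
    rw [show μ.restrict S = μ.restrict (⋃ n : ℤ, (A n ∩ S)) by rw [← hcover]]
    exact lintegral_iUnion
      (fun n => (measurable_strip n).inter (measurable_sector θ))
      (strip_disjoint.mono fun i j hd => hd.mono inter_subset_left inter_subset_left) h
  rw [hdecomp]
  have hterm : ∀ n : ℤ, ∫⁻ z in A n ∩ S, h z ∂μ
      ≤ ENNReal.ofReal (γ * (2:ℝ)^(1-α+β))
        * ENNReal.ofReal ((t*(2:ℝ)^(n-1))^β * Real.exp (-(t*(2:ℝ)^(n-1)))) := by
    intro n
    have hp1 : (0:ℝ) < (2:ℝ)^(n-1) := by positivity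
    set Cb : ℝ≥0∞ := ENNReal.ofReal (((2:ℝ)^(n-1) : ℝ)^(α-1)
      * ((t*(2:ℝ)^n)^β * Real.exp (-(t*(2:ℝ)^(n-1))))) with hCb
    have hpt : ∀ z ∈ A n ∩ S, h z ≤ Cb := by
      rintro z ⟨⟨hz1, hz2⟩, hzS⟩
      have hx : 0 < z.re := hp1.trans hz1
      apply ENNReal.ofReal_le_ofReal
      have b1 : z.re^(α-1) ≤ ((2:ℝ)^(n-1) : ℝ)^(α-1) :=
        Real.rpow_le_rpow_of_nonpos hp1 hz1.le (by linarith)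
      have b2 : (t*z.re)^β ≤ (t*(2:ℝ)^n)^β :=
        Real.rpow_le_rpow (by positivity) (mul_le_mul_of_nonneg_left hz2 ht.le) hβ0.le
      have b3 : Real.exp (-(t*z.re)) ≤ Real.exp (-(t*(2:ℝ)^(n-1))) := by
        apply Real.exp_le_exp.mpr
        have := mul_le_mul_of_nonneg_left hz1.le ht.le
        linarith
      have hb2n : (0:ℝ) ≤ (t*(2:ℝ)^n)^β := Real.rpow_nonneg (by positivity) _
      have := mul_le_mul b2 b3 (Real.exp_nonneg _) hb2n
      calc z.re^(α-1) * ((t*z.re)^β * Real.exp (-(t*z.re)))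
          ≤ z.re^(α-1) * ((t*(2:ℝ)^n)^β * Real.exp (-(t*(2:ℝ)^(n-1)))) :=
            mul_le_mul_of_nonneg_left this (Real.rpow_nonneg hx.le _)
        _ ≤ ((2:ℝ)^(n-1) : ℝ)^(α-1) * ((t*(2:ℝ)^n)^β * Real.exp (-(t*(2:ℝ)^(n-1)))) :=
            mul_le_mul_of_nonneg_right b1 (by positivity)
    have hmeas : μ (A n ∩ S) ≤ ENNReal.ofReal (γ * (2:ℝ)^((n:ℝ)*(1-α))) := by
      refine le_trans (measure_mono ?_) (hcarl n)
      rintro z ⟨⟨hz1, hz2⟩, hzS⟩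
      refine ⟨hz1, hz2, ?_⟩
      have him := im_le hθ1 hzS.1 hzS.2
      have h2n : (2:ℝ)^(n-1) = (2:ℝ)^n / 2 := by
        rw [zpow_sub_one₀ (by norm_num : (2:ℝ) ≠ 0)]; ring
      rw [h2n]
      calc |z.im| ≤ z.re / 2 := him
        _ ≤ (2:ℝ)^n / 2 := by linarith
    calc ∫⁻ z in A n ∩ S, h z ∂μ
        ≤ ∫⁻ _ in A n ∩ S, Cb ∂μ :=
          setLIntegral_mono' ((measurable_strip n).inter (measurable_sector θ)) hpt
      _ = Cb * μ (A n ∩ S) := setLIntegral_const _ _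
      _ ≤ Cb * ENNReal.ofReal (γ * (2:ℝ)^((n:ℝ)*(1-α))) :=
          mul_le_mul_right hmeas _
      _ = ENNReal.ofReal (γ * (2:ℝ)^(1-α+β))
          * ENNReal.ofReal ((t*(2:ℝ)^(n-1))^β * Real.exp (-(t*(2:ℝ)^(n-1)))) := by
          rw [hCb, ← ENNReal.ofReal_mul (by positivity), ← ENNReal.ofReal_mul (by positivity)]
          congr 1
          exact strip_algebra hα1 hβ0 ht n
  calc ∑' n : ℤ, ∫⁻ z in A n ∩ S, h z ∂μ
      ≤ ∑' n : ℤ, ENNReal.ofReal (γ * (2:ℝ)^(1-α+β))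
        * ENNReal.ofReal ((t*(2:ℝ)^(n-1))^β * Real.exp (-(t*(2:ℝ)^(n-1)))) :=
        ENNReal.tsum_le_tsum hterm
    _ = ENNReal.ofReal (γ * (2:ℝ)^(1-α+β))
        * ∑' n : ℤ, ENNReal.ofReal ((t*(2:ℝ)^(n-1))^β * Real.exp (-(t*(2:ℝ)^(n-1)))) :=
        ENNReal.tsum_mul_left
    _ ≤ ENNReal.ofReal (γ * (2:ℝ)^(1-α+β)) * (32 * (1 - ENNReal.ofReal ((2:ℝ)^(-β)))⁻¹) :=
        mul_le_mul_right (sum_phi hβ0 hβ1 ht) _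


end CarlesonAux

open CarlesonAux

/-- Sufficiency of the dyadic half-square condition: if `μ` is supported in the sector
`S(θ)` with `0 < θ < arctan(1/2)`, `0 < α < 1`, and `μ(T_n) ≤ γ 2^{n(1-α)}` for all
`n ∈ ℤ`, then the Laplace–Carleson embedding `ℒ : L²((0,∞), t^α dt) → L²(ℂ₊, μ)` is
bounded with norm at most a constant (depending only on `α`) times `γ^{1/2}`. -/
theorem carleson_dyadic_sufficient
    (θ : ℝ) (hθ0 : 0 < θ) (hθ1 : θ < Real.arctan (1 / 2))
    (α : ℝ) (hα0 : 0 < α) (hα1 : α < 1) :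
    ∃ C > (0 : ℝ), ∀ (μ : Measure ℂ) (γ : ℝ), 0 < γ →
      μ {z : ℂ | ¬ (0 < z.re ∧ |Complex.arg z| < θ)} = 0 →
      (∀ n : ℤ, μ {z : ℂ | (2 : ℝ) ^ (n - 1) < z.re ∧ z.re ≤ (2 : ℝ) ^ n ∧
          |z.im| ≤ (2 : ℝ) ^ (n - 1)} ≤ ENNReal.ofReal (γ * (2 : ℝ) ^ ((n : ℝ) * (1 - α)))) →
      ∀ f : ℝ → ℂ, Measurable f →
        Integrable (fun t => ‖f t‖ ^ 2 * t ^ α) ((volume : Measure ℝ).restrict (Ioi 0)) →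
        (∫⁻ z : ℂ, (‖∫ t in Ioi (0 : ℝ), Complex.exp (-(t : ℂ) * z) * f t‖₊ : ℝ≥0∞) ^ 2 ∂μ)
          ≤ ENNReal.ofReal (C ^ 2 * γ * ∫ t in Ioi (0 : ℝ), ‖f t‖ ^ 2 * t ^ α) := by
  set β : ℝ := (1-α)/2 with hβdef
  have hβ0 : 0 < β := by rw [hβdef]; linarith
  have hβ1 : β ≤ 1 := by rw [hβdef]; linarith
  set r : ℝ≥0∞ := ENNReal.ofReal ((2:ℝ)^(-β)) with hr
  have hrlt : r < 1 := by
    rw [hr]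
    exact ENNReal.ofReal_lt_one.mpr
      (Real.rpow_lt_one_of_one_lt_of_neg one_lt_two (by linarith))
  set Ctop : ℝ≥0∞ := 32 * (1 - r)⁻¹ with hCtop
  have h1r : 1 - r ≠ 0 := (tsub_pos_of_lt hrlt).ne'
  have h1rtop : 1 - r ≠ ∞ := (lt_of_le_of_lt tsub_le_self ENNReal.one_lt_top).ne
  have hCtop_ne : Ctop ≠ ∞ := by
    rw [hCtop]
    exact ENNReal.mul_ne_top (by norm_num) (ENNReal.inv_ne_top.mpr h1r)
  have hCtop_pos : 0 < Ctop := by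
    rw [hCtop]
    exact ENNReal.mul_pos (by norm_num) (ENNReal.inv_pos.mpr h1rtop).ne'
  set CtR : ℝ := Ctop.toReal with hCtR
  have hCtRpos : 0 < CtR := ENNReal.toReal_pos hCtop_pos.ne' hCtop_ne
  have hΓpos : 0 < Real.Gamma β := Real.Gamma_pos_of_pos hβ0
  have h2pos : (0:ℝ) < (2:ℝ)^(1-α+β) := Real.rpow_pos_of_pos two_pos _
  set D : ℝ := Real.Gamma β * ((2:ℝ)^(1-α+β) * CtR) with hD
  have hDpos : 0 < D := by rw [hD]; exact mul_pos hΓpos (mul_pos h2pos hCtRpos)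
  refine ⟨Real.sqrt D, Real.sqrt_pos.mpr hDpos, ?_⟩
  intro μ γ hγ hsupp hcarl f hf hfi
  -- σ-finiteness of μ
  haveI hsf : SigmaFinite μ := by
    set T : ℤ → Set ℂ := fun n => {z : ℂ | (2:ℝ)^(n-1) < z.re ∧ z.re ≤ (2:ℝ)^n ∧
      |z.im| ≤ (2:ℝ)^(n-1)} with hT
    set N : Set ℂ := {z : ℂ | ¬ (0 < z.re ∧ |Complex.arg z| < θ)} with hN
    refine Measure.sigmaFinite_of_countable (countable_range (fun n : ℤ => T n ∪ N)) ?_ ?_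
    · rintro s ⟨n, rfl⟩
      calc μ (T n ∪ N) ≤ μ (T n) + μ N := measure_union_le _ _
        _ ≤ ENNReal.ofReal (γ * (2:ℝ)^((n:ℝ)*(1-α))) + 0 := add_le_add (hcarl n) hsupp.le
        _ < ∞ := by rw [add_zero]; exact ENNReal.ofReal_lt_top
    · rw [sUnion_range]
      apply eq_univ_of_forall
      intro z
      by_cases hz : 0 < z.re ∧ |Complex.arg z| < θ
      · obtain ⟨n, h1, h2⟩ := exists_dyadic hz.1
        have h2n : (2:ℝ)^(n-1) = (2:ℝ)^n/2 := by
          rw [zpow_sub_one₀ (by norm_num : (2:ℝ) ≠ 0)]; ring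
        have him : |z.im| ≤ (2:ℝ)^(n-1) := by
          have := im_le hθ1 hz.1 hz.2
          rw [h2n]; linarith
        exact mem_iUnion.mpr ⟨n, Or.inl ⟨h1, h2, him⟩⟩
      · exact mem_iUnion.mpr ⟨0, Or.inr hz⟩
  set ν := (volume : Measure ℝ).restrict (Ioi 0) with hν
  set G : ℂ → ℝ → ℝ≥0∞ := fun z t =>
    ENNReal.ofReal (z.re^(α-1) * ((t*z.re)^β * Real.exp (-(t*z.re))))
      * (ENNReal.ofReal (t^α) * ((‖f t‖₊ : ℝ≥0∞))^2) with hG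
  have hae : ∀ᵐ z ∂μ, 0 < z.re ∧ |Complex.arg z| < θ := ae_iff.mpr hsupp
  have hGm : Measurable (Function.uncurry G) := by
    have m1 : Measurable fun p : ℂ × ℝ => p.1.re := Complex.measurable_re.comp measurable_fst
    have m2 : Measurable fun p : ℂ × ℝ => p.2 := measurable_snd
    apply Measurable.fun_mul
    · apply ENNReal.measurable_ofReal.comp
      exact (m1.pow measurable_const).mul
        (((m2.mul m1).pow measurable_const).mul ((m2.mul m1).neg.exp))
    · exact (ENNReal.measurable_ofReal.comp (m2.pow measurable_const)).mul
        (((hf.comp measurable_snd).nnnorm.coe_nnreal_ennreal).pow_const 2)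
  set I : ℝ := ∫ t in Ioi (0:ℝ), ‖f t‖ ^ 2 * t ^ α with hI
  have hInn : 0 ≤ᵐ[ν] fun t => ‖f t‖ ^ 2 * t ^ α := by
    filter_upwards [ae_restrict_mem measurableSet_Ioi] with t ht
    have ht' : (0:ℝ) < t := ht
    positivity
  have hInneg : 0 ≤ I := integral_nonneg_of_ae hInn
  have step5 : ∫⁻ t, ENNReal.ofReal (t^α) * ((‖f t‖₊ : ℝ≥0∞))^2 ∂ν = ENNReal.ofReal I := by
    rw [hI, ofReal_integral_eq_lintegral_ofReal hfi hInn]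
    apply lintegral_congr_ae
    filter_upwards [ae_restrict_mem measurableSet_Ioi] with t ht
    have ht' : (0:ℝ) < t := ht
    rw [← enorm_eq_nnnorm, ← ofReal_norm_eq_enorm, ← ENNReal.ofReal_pow (norm_nonneg _),
      ← ENNReal.ofReal_mul (by positivity)]
    rw [mul_comm]
  have chain : (∫⁻ z : ℂ, (‖∫ t in Ioi (0 : ℝ), Complex.exp (-(t : ℂ) * z) * f t‖₊ : ℝ≥0∞) ^ 2 ∂μ)
      ≤ ENNReal.ofReal (Real.Gamma β)
        * ((ENNReal.ofReal (γ * (2:ℝ)^(1-α+β)) * Ctop) * ENNReal.ofReal I) := by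
    calc (∫⁻ z : ℂ, (‖∫ t in Ioi (0 : ℝ), Complex.exp (-(t : ℂ) * z) * f t‖₊ : ℝ≥0∞) ^ 2 ∂μ)
        ≤ ∫⁻ z, ENNReal.ofReal (Real.Gamma β) * ∫⁻ t, G z t ∂ν ∂μ := by
          apply lintegral_mono_ae
          filter_upwards [hae] with z hz
          exact pointwise_CS hα0 hα1 hβdef f hf hz.1
      _ = ENNReal.ofReal (Real.Gamma β) * ∫⁻ z, ∫⁻ t, G z t ∂ν ∂μ :=
          lintegral_const_mul' _ _ ENNReal.ofReal_ne_top
      _ = ENNReal.ofReal (Real.Gamma β) * ∫⁻ t, ∫⁻ z, G z t ∂μ ∂ν := by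
          rw [lintegral_lintegral_swap hGm.aemeasurable]
      _ ≤ ENNReal.ofReal (Real.Gamma β) * ∫⁻ t, (ENNReal.ofReal (γ * (2:ℝ)^(1-α+β)) * Ctop)
            * (ENNReal.ofReal (t^α) * ((‖f t‖₊ : ℝ≥0∞))^2) ∂ν := by
          apply mul_le_mul_right
          apply lintegral_mono_ae
          filter_upwards [ae_restrict_mem measurableSet_Ioi] with t ht
          have ht' : (0:ℝ) < t := ht
          have hconst_ne : ENNReal.ofReal (t^α) * ((‖f t‖₊ : ℝ≥0∞))^2 ≠ ∞ :=
            ENNReal.mul_ne_top ENNReal.ofReal_ne_top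
              (by exact ENNReal.pow_ne_top ENNReal.coe_ne_top)
          have hsplit : ∫⁻ z, G z t ∂μ
              = (∫⁻ z, ENNReal.ofReal (z.re^(α-1) * ((t*z.re)^β * Real.exp (-(t*z.re)))) ∂μ)
                * (ENNReal.ofReal (t^α) * ((‖f t‖₊ : ℝ≥0∞))^2) :=
            lintegral_mul_const' _ _ hconst_ne
          rw [hsplit]
          exact mul_le_mul_left
            (K_bound hθ1 hα1 hβ0 hβ1 hγ.le μ hsupp hcarl ht') _
      _ = ENNReal.ofReal (Real.Gamma β) * ((ENNReal.ofReal (γ * (2:ℝ)^(1-α+β)) * Ctop)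
            * ∫⁻ t, ENNReal.ofReal (t^α) * ((‖f t‖₊ : ℝ≥0∞))^2 ∂ν) := by
          rw [lintegral_const_mul' _ _ (ENNReal.mul_ne_top ENNReal.ofReal_ne_top hCtop_ne)]
      _ = ENNReal.ofReal (Real.Gamma β)
          * ((ENNReal.ofReal (γ * (2:ℝ)^(1-α+β)) * Ctop) * ENNReal.ofReal I) := by
          rw [step5]
  refine le_trans chain (le_of_eq ?_)
  rw [Real.sq_sqrt hDpos.le]
  have hCtopR : Ctop = ENNReal.ofReal CtR := (ENNReal.ofReal_toReal hCtop_ne).symm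
  rw [hCtopR, ← ENNReal.ofReal_mul (by positivity), ← ENNReal.ofReal_mul (by positivity),
    ← ENNReal.ofReal_mul hΓpos.le]
  congr 1
  rw [hD]
  ring
end

section
/- Let 1 < p ≤ 2 and p' ≤ q < ∞. If the Laplace transform maps L^p(0,∞) boundedly into L^q(ℂ₊, μ) with norm m₀, where μ = Σ_k |b_k|^q δ_{-λ_k} with Re λ_k < 0, then there is a constant κ (depending on m₀, p, q) such that (Σ_k |b_k|^q |λ - λ_k|^{-q})^{1/q} ≤ κ (Re λ)^{-1/p} for all λ ∈ ℂ₊. -/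
open MeasureTheory Complex Set
open scoped ENNReal

open Filter
open scoped Topology

lemma cexp_cont (a : ℂ) : Continuous (fun t : ℝ => Complex.exp (-(t : ℂ) * a)) :=
  Complex.continuous_exp.comp ((Complex.continuous_ofReal.neg).mul continuous_const)

lemma norm_cexp' (a : ℂ) (t : ℝ) : ‖Complex.exp (-(t : ℂ) * a)‖ = Real.exp (-a.re * t) := by
  rw [Complex.norm_exp]
  congr 1
  simp [Complex.mul_re]
  ring

lemma integral_rexp_Ioi (b : ℝ) (hb : 0 < b) :
    ∫ t in Ioi (0:ℝ), Real.exp (-b * t) = b⁻¹ := by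
  have hd : ∀ x ∈ Ioi (0:ℝ), HasDerivAt (fun t : ℝ => -b⁻¹ * Real.exp (-b * t))
      (Real.exp (-b * x)) x := by
    intro x _
    have h1 : HasDerivAt (fun t : ℝ => -b * t) (-b) x := by
      simpa using (hasDerivAt_id x).const_mul (-b)
    have := (h1.exp).const_mul (-b⁻¹)
    convert this using 1
    · rfl
    · rfl
    · field_simp
  have htend : Tendsto (fun t : ℝ => -b⁻¹ * Real.exp (-b * t)) atTop (nhds 0) := by
    rw [show (0:ℝ) = -b⁻¹ * 0 by ring]
    apply Tendsto.const_mul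
    apply Real.tendsto_exp_atBot.comp
    have h2 := tendsto_neg_atBot_iff.mpr (tendsto_id.const_mul_atTop hb)
    exact h2.congr (fun x => by simp [neg_mul])
  have hc : Continuous (fun t : ℝ => -b⁻¹ * Real.exp (-b * t)) :=
    continuous_const.mul (Real.continuous_exp.comp (continuous_const.mul continuous_id))
  have := integral_Ioi_of_hasDerivAt_of_tendsto (a := 0)
    hc.continuousWithinAt hd (exp_neg_integrableOn_Ioi 0 hb) htend
  rw [this]; simp

lemma cexp_integrableOn (a : ℂ) (ha : 0 < a.re) :
    IntegrableOn (fun t : ℝ => Complex.exp (-(t : ℂ) * a)) (Ioi (0:ℝ)) := by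
  apply Integrable.mono' ((exp_neg_integrableOn_Ioi 0 ha).ofReal (f := fun x => Real.exp (-a.re * x)))
  · exact (cexp_cont a).aestronglyMeasurable
  · filter_upwards with t
    simp [Complex.norm_exp, Complex.norm_real, Real.abs_exp, neg_mul, mul_comm]

lemma integral_cexp_Ioi (a : ℂ) (ha : 0 < a.re) :
    ∫ t in Ioi (0:ℝ), Complex.exp (-(t : ℂ) * a) = a⁻¹ := by
  have ha0 : a ≠ 0 := fun h => by simp [h] at ha
  have hd : ∀ x ∈ Ioi (0:ℝ), HasDerivAt (fun t : ℝ => -a⁻¹ * Complex.exp (-(t : ℂ) * a))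
      (Complex.exp (-(x : ℂ) * a)) x := by
    intro x _
    have h1 : HasDerivAt (fun t : ℝ => (-(t : ℂ) * a)) (-a) x := by
      have := ((Complex.ofRealCLM.hasDerivAt (x := x)).neg.mul_const a)
      simpa using this
    have := (h1.cexp).const_mul (-a⁻¹)
    convert this using 1
    · rfl
    · field_simp
  have htend : Tendsto (fun t : ℝ => -a⁻¹ * Complex.exp (-(t : ℂ) * a)) atTop (nhds 0) := by
    rw [show (0:ℂ) = -a⁻¹ * 0 by ring]
    apply Tendsto.const_mul
    rw [tendsto_zero_iff_norm_tendsto_zero]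
    have hn : ∀ t : ℝ, ‖Complex.exp (-(t : ℂ) * a)‖ = Real.exp (-a.re * t) := by
      intro t
      rw [Complex.norm_exp]
      congr 1
      simp [Complex.mul_re]
      ring
    simp only [hn]
    apply Real.tendsto_exp_atBot.comp
    exact (tendsto_neg_atBot_iff.mpr (tendsto_id.const_mul_atTop ha)).congr
      (fun x => by simp [neg_mul])
  have := integral_Ioi_of_hasDerivAt_of_tendsto (a := 0)
    (continuous_const.mul (cexp_cont a)).continuousWithinAt hd (cexp_integrableOn a ha) htend
  rw [this]; simp

lemma eLpNorm_cexp (p : ℝ) (hp : 0 < p) (l : ℂ) (hl : 0 < l.re) :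
    eLpNorm (fun t : ℝ => Complex.exp (-(t : ℂ) * l)) (ENNReal.ofReal p)
      ((volume : Measure ℝ).restrict (Ioi 0))
      = ENNReal.ofReal ((p * l.re)⁻¹ ^ (1 / p)) := by
  have hpl : 0 < p * l.re := mul_pos hp hl
  rw [eLpNorm_eq_lintegral_rpow_enorm_toReal (by simp [hp]) (by simp),
    ENNReal.toReal_ofReal hp.le]
  have hpt : ∀ t : ℝ, (‖Complex.exp (-(t : ℂ) * l)‖ₑ) ^ p
      = ENNReal.ofReal (Real.exp (-(p * l.re) * t)) := by
    intro t
    rw [← ofReal_norm, norm_cexp',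
      ENNReal.ofReal_rpow_of_pos (Real.exp_pos _), ← Real.exp_mul]
    ring_nf
  simp only [hpt]
  rw [← ofReal_integral_eq_lintegral_ofReal
    ((exp_neg_integrableOn_Ioi 0 hpl)) (ae_of_all _ fun t => (Real.exp_pos _).le),
    integral_rexp_Ioi _ hpl, ENNReal.ofReal_rpow_of_pos (by positivity)]
/-- Necessity of the resolvent condition: if `1 < p ≤ 2`, `p' ≤ q < ∞`, and the Laplace
transform maps `L^p(0,∞)` boundedly (with norm `m₀`) into `L^q(ℂ₊, μ)` where
`μ = Σ_k |b_k|^q δ_{-λ_k}`, `Re λ_k < 0`, then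
`(Σ_k |b_k|^q |λ-λ_k|^{-q})^{1/q} ≤ κ (Re λ)^{-1/p}` for all `λ ∈ ℂ₊`. -/
theorem resolvent_condition_necessary (p q : ℝ) (hp1 : 1 < p) (hp2 : p ≤ 2)
    (hpq : p / (p - 1) ≤ q)
    (lam b : ℕ → ℂ) (hre : ∀ k, (lam k).re < 0) (m₀ : ℝ) (hm₀ : 0 < m₀)
    (hbdd : ∀ u : ℝ → ℂ, Measurable u →
      MemLp u (ENNReal.ofReal p) ((volume : Measure ℝ).restrict (Ioi 0)) →
      (∫⁻ z : ℂ, (‖∫ t in Ioi (0 : ℝ), Complex.exp (-(t : ℂ) * z) * u t‖₊ : ℝ≥0∞) ^ q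
          ∂(Measure.sum fun k : ℕ =>
              (ENNReal.ofReal (‖b k‖ ^ q)) • Measure.dirac (-lam k))) ^ (1 / q)
        ≤ ENNReal.ofReal m₀ *
            eLpNorm u (ENNReal.ofReal p) ((volume : Measure ℝ).restrict (Ioi 0))) :
    ∃ κ > (0 : ℝ), ∀ l : ℂ, 0 < l.re →
      (∑' k : ℕ, ENNReal.ofReal (‖b k‖ ^ q * ‖l - lam k‖ ^ (-q)))
        ≤ ENNReal.ofReal (κ ^ q * l.re ^ (-(q / p))) := by
  have hp0 : 0 < p := lt_trans one_pos hp1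
  have hq0 : 0 < q := lt_of_lt_of_le (div_pos hp0 (by linarith)) hpq
  refine ⟨m₀ * p ^ (-(1/p)), by positivity, ?_⟩
  intro l hl
  set u : ℝ → ℂ := fun t => Complex.exp (-(t : ℂ) * l) with hu
  have hum : Measurable u := (cexp_cont l).measurable
  have hE := eLpNorm_cexp p hp0 l hl
  have hmem : MemLp u (ENNReal.ofReal p) ((volume : Measure ℝ).restrict (Ioi 0)) :=
    ⟨(cexp_cont l).aestronglyMeasurable, by rw [hu, hE]; exact ENNReal.ofReal_lt_top⟩
  have h := hbdd u hum hmem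
  -- compute the lintegral
  have hL : (∫⁻ z : ℂ, (‖∫ t in Ioi (0 : ℝ), Complex.exp (-(t : ℂ) * z) * u t‖₊ : ℝ≥0∞) ^ q
          ∂(Measure.sum fun k : ℕ =>
              (ENNReal.ofReal (‖b k‖ ^ q)) • Measure.dirac (-lam k)))
      = ∑' k : ℕ, ENNReal.ofReal (‖b k‖ ^ q * ‖l - lam k‖ ^ (-q)) := by
    rw [lintegral_sum_measure]
    refine tsum_congr fun k => ?_
    rw [lintegral_smul_measure, lintegral_dirac]
    have hrek : 0 < (l - lam k).re := by
      have := hre k; simp only [Complex.sub_re]; linarith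
    have hne : l - lam k ≠ 0 := fun h => by simp [h] at hrek
    have hint : ∫ t in Ioi (0:ℝ), Complex.exp (-(t : ℂ) * (-lam k)) * u t = (l - lam k)⁻¹ := by
      rw [MeasureTheory.setIntegral_congr_fun measurableSet_Ioi
        (fun t _ => by rw [hu]; rw [← Complex.exp_add]; ring_nf :
          ∀ t ∈ Ioi (0:ℝ), Complex.exp (-(t : ℂ) * (-lam k)) * u t
            = Complex.exp (-(t : ℂ) * (l - lam k)))]
      exact integral_cexp_Ioi _ hrek
    rw [hint, ← enorm_eq_nnnorm, ← ofReal_norm, norm_inv,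
      ENNReal.ofReal_rpow_of_pos (inv_pos.mpr (norm_pos_iff.mpr hne)),
      smul_eq_mul, ← ENNReal.ofReal_mul (by positivity)]
    congr 1
    rw [← Real.rpow_neg_one (‖l - lam k‖), ← Real.rpow_mul (norm_nonneg _), neg_one_mul]
  rw [hL, hE] at h
  set S := ∑' k : ℕ, ENNReal.ofReal (‖b k‖ ^ q * ‖l - lam k‖ ^ (-q)) with hS
  have h2 : S ≤ (ENNReal.ofReal m₀ * ENNReal.ofReal ((p * l.re)⁻¹ ^ (1/p))) ^ q := by
    have := ENNReal.rpow_le_rpow h hq0.le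
    rwa [← ENNReal.rpow_mul, one_div, inv_mul_cancel₀ hq0.ne', ENNReal.rpow_one] at this
  refine h2.trans (le_of_eq ?_)
  rw [← ENNReal.ofReal_mul hm₀.le, ENNReal.ofReal_rpow_of_pos (by positivity)]
  congr 1
  have hpl : 0 < p * l.re := mul_pos hp0 hl
  rw [Real.mul_rpow hm₀.le (by positivity), Real.mul_rpow hm₀.le (by positivity),
    mul_assoc]
  congr 1
  rw [← Real.rpow_neg_one (p * l.re), ← Real.rpow_mul hpl.le, ← Real.rpow_mul hpl.le,
    Real.mul_rpow hp0.le hl.le, ← Real.rpow_mul hp0.le]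
  congr 1
  · congr 1; ring
  · congr 1; ring
end

section
/- Let w : (0,∞) → ℝ₊ be defined by w(t) = 2π ∫₀^∞ e^{-2rt} dν̃(r) for a positive measure ν̃ on [0,∞) satisfying the Δ₂-condition with constant R. Then w satisfies a doubling-type estimate: w(t) ≤ C · w(2t) for all t > 0, where C depends only on R. -/
open MeasureTheory Set
open scoped ENNReal

lemma level_set_eq (s t : ℝ) (hs : 0 < s) (ht : 0 < t) :
    {r : ℝ | s < Real.exp (-2 * r * t)} ∩ Ici 0 = Ico 0 (-Real.log s / (2 * t)) := by
  ext r
  simp only [mem_inter_iff, mem_setOf_eq, mem_Ici, mem_Ico]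
  constructor
  · rintro ⟨h1, h2⟩
    refine ⟨h2, ?_⟩
    have := Real.log_lt_log hs h1
    rw [Real.log_exp] at this
    rw [lt_div_iff₀ (by linarith : (0:ℝ) < 2 * t)]
    nlinarith
  · rintro ⟨h2, h1⟩
    rw [lt_div_iff₀ (by linarith : (0:ℝ) < 2 * t)] at h1
    refine ⟨?_, h2⟩
    calc s = Real.exp (Real.log s) := (Real.exp_log hs).symm
      _ < Real.exp (-2 * r * t) := Real.exp_lt_exp.mpr (by nlinarith)

lemma level_mble (s t : ℝ) : MeasurableSet {r : ℝ | s < Real.exp (-2 * r * t)} :=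
  measurableSet_lt measurable_const
    (Real.continuous_exp.comp (by continuity)).measurable

/-- Doubling-type estimate for the Zen weight: if `ν̃` is a nonzero positive measure on
`[0,∞)` satisfying the `Δ₂`-condition with constant `R`, and
`w(t) = 2π ∫₀^∞ e^{-2rt} dν̃(r)` is finite for all `t > 0`, then `w(t) ≤ C w(2t)` for all
`t > 0`, with `C` depending only on `R`. -/
theorem zen_weight_doubling (R : ℝ) (hR : 0 < R) :
    ∃ C > (0 : ℝ), ∀ ν : Measure ℝ,
      (∀ r > (0 : ℝ), ν (Ico 0 (2 * r)) ≤ ENNReal.ofReal R * ν (Ico 0 r)) →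
      ν ≠ 0 →
      (∀ t > (0 : ℝ),
        (∫⁻ r in Ici (0 : ℝ), ENNReal.ofReal (Real.exp (-2 * r * t)) ∂ν) < ⊤) →
      ∀ t > (0 : ℝ),
        (∫⁻ r in Ici (0 : ℝ), ENNReal.ofReal (Real.exp (-2 * r * t)) ∂ν)
          ≤ ENNReal.ofReal C *
            ∫⁻ r in Ici (0 : ℝ), ENNReal.ofReal (Real.exp (-2 * r * (2 * t))) ∂ν := by
  refine ⟨R, hR, ?_⟩
  intro ν hΔ _ _ t ht
  have h2t : (0:ℝ) < 2 * t := by linarith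
  -- layer cake representations
  have hrep : ∀ u : ℝ, 0 < u →
      (∫⁻ r in Ici (0 : ℝ), ENNReal.ofReal (Real.exp (-2 * r * u)) ∂ν)
        = ∫⁻ s in Ioi (0:ℝ), ν (Ico 0 (-Real.log s / (2 * u))) := by
    intro u hu
    rw [lintegral_eq_lintegral_meas_lt _ (ae_of_all _ fun r => (Real.exp_pos _).le)
      (Real.continuous_exp.comp (by continuity)).measurable.aemeasurable]
    refine setLIntegral_congr_fun measurableSet_Ioi (fun s hs => ?_)
    rw [Measure.restrict_apply (level_mble s u), level_set_eq s u hs hu]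
  rw [hrep t ht, hrep (2*t) h2t]
  rw [← lintegral_const_mul' _ _ ENNReal.ofReal_ne_top]
  refine lintegral_mono_ae ?_
  filter_upwards [ae_restrict_mem measurableSet_Ioi] with s hs
  have key : -Real.log s / (2 * t) = 2 * (-Real.log s / (2 * (2 * t))) := by
    field_simp
  rw [key]
  rcases le_or_gt (-Real.log s / (2 * (2 * t))) 0 with h | h
  · rw [Ico_eq_empty (not_lt.mpr (by linarith : (2:ℝ) * (-Real.log s / (2 * (2 * t))) ≤ 0))]
    simp
  · exact hΔ _ h
end
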